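/- (Existence of the 6-ring bandwidth-optimal Allgather on DGX-1.) There exists a valid algorithm for the Allgather collective with C = 6 chunks per node on the DGX-1 topology with S = 7 steps and round sequence r_s = 1 for all s (total rounds R = 7). One such algorithm runs the ring-Allgather simultaneously on six link-disjoint unidirectional Hamiltonian rings: the cycle 0,1,4,5,6,7,2,3 traversed twice in each direction (using its capacity-2 links) and the cycle 0,2,1,3,6,4,7,5 traversed once in each direction (using its capacity-1 links), with one of the six chunks of each node assigned to each ring. -/

import Mathlib

def stepRun {G P S : ℕ} (pre : Set (Fin G × Fin P))
    (T : Finset (Fin G × Fin P × Fin P × Fin S)) : ℕ → Set (Fin G × Fin P)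
  | 0 => pre
  | s + 1 =>
      stepRun pre T s ∪
        {q | ∃ n, (q.1, n) ∈ stepRun pre T s ∧ ∃ h : s < S, (q.1, n, q.2, ⟨s, h⟩) ∈ T}

def ValidAlgo {G P S : ℕ} (cap : Fin P → Fin P → ℕ) (pre post : Set (Fin G × Fin P))
    (T : Finset (Fin G × Fin P × Fin P × Fin S)) (r : Fin S → ℕ) : Prop :=
  (∀ c n n' s, (c, n, n', s) ∈ T → (c, n) ∈ stepRun pre T (s : ℕ)) ∧
  post ⊆ stepRun pre T S ∧
  ∀ s n n',
    (T.filter fun x => x.2.1 = n ∧ x.2.2.1 = n' ∧ x.2.2.2 = s).card ≤ cap n n' * r s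

def agPre (C P : ℕ) : Set (Fin (C * P) × Fin P) := {q | (q.1 : ℕ) % P = (q.2 : ℕ)}

def dgx1cap (n n' : Fin 8) : ℕ :=
  if ((n, n') ∈ ([(0,1),(1,4),(4,5),(5,6),(6,7),(2,7),(2,3),(0,3)] : List (Fin 8 × Fin 8))
      ∨ (n', n) ∈ ([(0,1),(1,4),(4,5),(5,6),(6,7),(2,7),(2,3),(0,3)] : List (Fin 8 × Fin 8)))
  then 2
  else if ((n, n') ∈ ([(0,2),(1,2),(1,3),(3,6),(4,6),(4,7),(5,7),(0,5)] : List (Fin 8 × Fin 8))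
      ∨ (n', n) ∈ ([(0,2),(1,2),(1,3),(3,6),(4,6),(4,7),(5,7),(0,5)] : List (Fin 8 × Fin 8)))
  then 1 else 0

/-- Successor map of ring `k`: rings 0,1 traverse the capacity-2 Hamiltonian cycle
0,1,4,5,6,7,2,3 forward, rings 2,3 backward; ring 4 traverses 0,2,1,3,6,4,7,5 forward,
ring 5 backward. -/
def nxt (k : Fin 6) : Fin 8 → Fin 8 :=
  if (k:ℕ) < 2 then ![1,4,3,0,5,6,7,2]
  else if (k:ℕ) < 4 then ![3,0,7,2,1,4,5,6]
  else if (k:ℕ) = 4 then ![2,3,1,6,7,0,4,5]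
  else ![5,2,0,1,6,7,3,4]

/-- Position of chunk `c` after `t` ring steps: chunk `c` is on ring `c / 8`
and originates at node `c % 8`. -/
def pos (c : Fin (6*8)) (t : ℕ) : Fin 8 :=
  (nxt ⟨(c:ℕ)/8, by omega⟩)^[t] ⟨(c:ℕ)%8, Nat.mod_lt _ (by norm_num)⟩

def ringEmb : Fin (6*8) × Fin 7 ↪ Fin (6*8) × Fin 8 × Fin 8 × Fin 7 :=
  ⟨fun p => (p.1, pos p.1 p.2, pos p.1 ((p.2:ℕ)+1), p.2), by
    rintro ⟨c, s⟩ ⟨c', s'⟩ h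
    simp only [Prod.mk.injEq] at h
    exact Prod.ext h.1 h.2.2.2⟩

/-- The 6-ring send set: at step `s`, chunk `c` is sent from `pos c s` to `pos c (s+1)`. -/
def ringT : Finset (Fin (6*8) × Fin 8 × Fin 8 × Fin 7) := Finset.map ringEmb Finset.univ

lemma mem_ringT {c : Fin (6*8)} {n n' : Fin 8} {s : Fin 7} :
    (c, n, n', s) ∈ ringT ↔ n = pos c s ∧ n' = pos c ((s:ℕ)+1) := by
  simp only [ringT, Finset.mem_map, Finset.mem_univ, true_and, ringEmb,
    Function.Embedding.coeFn_mk, Prod.mk.injEq]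
  change (∃ a : Fin (6*8) × Fin 7, (a.1, pos a.1 a.2, pos a.1 ((a.2:ℕ)+1), a.2) = (c, n, n', s)) ↔ _
  simp only [Prod.mk.injEq]
  constructor
  · rintro ⟨⟨a, b⟩, ⟨h1, h2, h3, h4⟩⟩
    subst h1; subst h4; exact ⟨h2.symm, h3.symm⟩
  · rintro ⟨h1, h2⟩; exact ⟨(c, s), rfl, h1.symm, h2.symm, rfl⟩

lemma run_char : ∀ s : ℕ, s ≤ 7 →
    stepRun (agPre 6 8) ringT s = {q | ∃ t ≤ s, pos q.1 t = q.2} := by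
  intro s
  induction s with
  | zero =>
    intro _
    ext ⟨c, m⟩
    simp only [stepRun, agPre, Set.mem_setOf_eq, Nat.le_zero, exists_eq_left]
    constructor
    · intro h; exact Fin.ext h
    · intro h; rw [← h]; rfl
  | succ s ih =>
    intro hs
    have hs7 : s < 7 := hs
    ext ⟨c, m⟩
    simp only [stepRun, ih (le_of_lt hs7), Set.mem_union, Set.mem_setOf_eq]
    constructor
    · rintro (⟨t, ht, hp⟩ | ⟨n, _, h7, hT⟩)
      · exact ⟨t, Nat.le_succ_of_le ht, hp⟩
      · rcases mem_ringT.mp hT with ⟨_, hm⟩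
        exact ⟨s + 1, le_refl _, hm.symm⟩
    · rintro ⟨t, ht, hp⟩
      rcases Nat.lt_succ_iff_lt_or_eq.mp (Nat.lt_succ_of_le ht) with h | h
      · exact Or.inl ⟨t, Nat.lt_succ_iff.mp h, hp⟩
      · subst h
        exact Or.inr ⟨pos c s, ⟨s, le_refl _, rfl⟩, hs7, mem_ringT.mpr ⟨rfl, hp ▸ rfl⟩⟩

set_option maxHeartbeats 1000000 in
lemma ring_covers : ∀ (c : Fin (6*8)) (n : Fin 8), ∃ t ≤ 7, pos c t = n := by decide

set_option maxHeartbeats 4000000 in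
set_option maxRecDepth 100000 in
lemma ring_cap : ∀ (s : Fin 7) (n n' : Fin 8),
    (ringT.filter fun x => x.2.1 = n ∧ x.2.2.1 = n' ∧ x.2.2.2 = s).card ≤ dgx1cap n n' * 1 := by
  decide

theorem dgx1_allgather_six_ring_exists :
    ∃ T : Finset (Fin (6 * 8) × Fin 8 × Fin 8 × Fin 7),
      ValidAlgo dgx1cap (agPre 6 8) Set.univ T (fun _ => 1) ∧
        (∑ _s : Fin 7, (1 : ℕ)) = 7 := by
  refine ⟨ringT, ⟨?_, ?_, ring_cap⟩, by simp⟩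
  · intro c n n' s hT
    rcases mem_ringT.mp hT with ⟨hn, _⟩
    rw [run_char (s : ℕ) (le_of_lt s.isLt)]
    exact ⟨(s : ℕ), le_refl _, hn.symm⟩
  · intro q _
    rw [run_char 7 (le_refl _)]
    exact ring_covers q.1 q.2
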